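/- Let $r_0 < r_1$, $\tau > 0$, $\mathcal{J} > 0$, $0 < j < \mathcal{J}$, $\underline{B},\overline{B}$ be constants with $\overline{B} + \frac{1}{\tau} > \mathcal{J}$ and $\underline{B} + \frac{\mathcal{J}}{\tau(\overline{B} + 1/\tau)} > \mathcal{J}$. Define $\mathfrak{m}(r) = \mathcal{J} + \lambda \sin\left(\pi \frac{r - r_0}{r_1 - r_0}\right)$. Then there exists $\lambda_0 > 0$, independent of $j$, such that for all $0 < \lambda < \lambda_0$ and every measurable $B$ with $\underline{B} \leq B(r) \leq \overline{B}$, $\mathfrak{m}$ is a (classical) subsolution: $-\left[r\left(\frac{1}{\mathfrak{m}} - \frac{j^2}{\mathfrak{m}^3}\right)\mathfrak{m}' + \frac{r\mathcal{J}}{\tau \mathfrak{m}}\right]' + \mathfrak{m} - B(r) < 0$ a.e. on $(r_0, r_1)$, with $\mathfrak{m}(r_0) = \mathfrak{m}(r_1) = \mathcal{J}$. -/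

import Mathlib

private theorem my_abs_mul_le {x y a b : ℝ} (hx : |x| ≤ a) (hy : |y| ≤ b) :
    |x * y| ≤ a * b := by
  rw [abs_mul]
  exact mul_le_mul hx hy (abs_nonneg _) (le_trans (abs_nonneg _) hx)

set_option maxHeartbeats 4000000 in
theorem stmt_13 (r0 r1 τ J Bl Bu : ℝ) (hr : r0 < r1) (hτ : 0 < τ) (hJ : 0 < J)
    (h1 : Bu + 1/τ > J)
    (h2 : Bl + J/(τ*(Bu + 1/τ)) > J) :
    ∃ lam0 > 0, ∀ j : ℝ, 0 < j → j < J → ∀ lam : ℝ, 0 < lam → lam < lam0 →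
      ∀ B : ℝ → ℝ, Measurable B → (∀ r ∈ Set.Icc r0 r1, Bl ≤ B r ∧ B r ≤ Bu) →
      let frakm : ℝ → ℝ := fun r => J + lam * Real.sin (Real.pi * (r - r0)/(r1 - r0))
      frakm r0 = J ∧ frakm r1 = J ∧
      ∀ r ∈ Set.Ioo r0 r1,
        -(deriv (fun s => s * (1/(frakm s) - j^2/(frakm s)^3) * deriv frakm s
            + s * J / (τ * frakm s)) r) + frakm r - B r < 0 := by
  have hr10 : (0:ℝ) < r1 - r0 := by linarith
  set k := Real.pi / (r1 - r0) with hkdef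
  have hk : 0 < k := div_pos Real.pi_pos hr10
  set M := max |r0| |r1| with hMdef
  have hM : 0 ≤ M := by rw [hMdef]; positivity
  have hBupos : 0 < Bu + 1/τ := lt_trans hJ h1
  set ε := Bl + J/(τ*(Bu + 1/τ)) - J with hεdef
  have hε : 0 < ε := by rw [hεdef]; linarith
  set C := 10*k/J + 52*M*k^2/J^2 + 10*M*k^2/J + 4*M*k/(J*τ) + 1 with hCdef
  have hC : 0 < C := by rw [hCdef, hMdef]; positivity
  refine ⟨min (min 1 (J/2)) (min (Bu + 1/τ - J) (ε/C)),
    lt_min (lt_min one_pos (by positivity)) (lt_min (by linarith) (div_pos hε hC)), ?_⟩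
  intro j hj hjJ lam hlam hlam0 B hBmeas hBbd
  intro frakm
  have hfr : frakm = fun r => J + lam * Real.sin (Real.pi * (r - r0)/(r1 - r0)) := rfl
  clear_value frakm
  have hlam1 : lam ≤ 1 := le_of_lt (hlam0.trans_le ((min_le_left _ _).trans (min_le_left _ _)))
  have hlamJ : lam < J/2 := hlam0.trans_le ((min_le_left _ _).trans (min_le_right _ _))
  have hlamB : lam < Bu + 1/τ - J := hlam0.trans_le ((min_le_right _ _).trans (min_le_left _ _))
  have hlamC : lam < ε/C := hlam0.trans_le ((min_le_right _ _).trans (min_le_right _ _))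
  have hlamCε : (10*k/J + 52*M*k^2/J^2 + 10*M*k^2/J + 4*M*k/(J*τ) + 1) * lam < ε := by
    have h := (lt_div_iff₀ hC).mp hlamC
    rw [mul_comm] at h
    rwa [hCdef] at h
  have hφd : ∀ s : ℝ, HasDerivAt (fun sx : ℝ => Real.pi * (sx - r0)/(r1 - r0)) k s := by
    intro s
    have h := (((hasDerivAt_id s).sub_const r0).const_mul Real.pi).div_const (r1 - r0)
    simpa [hkdef, mul_one] using h
  have hmD : ∀ s : ℝ, HasDerivAt frakm
      (lam * (Real.cos (Real.pi * (s - r0)/(r1 - r0)) * k)) s := by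
    intro s
    rw [hfr]
    exact ((hφd s).sin.const_mul lam).const_add J
  have hderiveq : deriv frakm = fun s => lam * (Real.cos (Real.pi * (s - r0)/(r1 - r0)) * k) :=
    funext fun s => (hmD s).deriv
  have hmlb : ∀ s : ℝ, J/2 < frakm s := by
    intro s
    have h1s := Real.neg_one_le_sin (Real.pi * (s - r0)/(r1 - r0))
    rw [hfr]
    show J/2 < J + lam * Real.sin (Real.pi * (s - r0)/(r1 - r0))
    nlinarith [mul_le_mul_of_nonneg_left h1s hlam.le]
  have hmub : ∀ s : ℝ, frakm s ≤ J + lam := by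
    intro s
    have h1s := Real.sin_le_one (Real.pi * (s - r0)/(r1 - r0))
    rw [hfr]
    show J + lam * Real.sin (Real.pi * (s - r0)/(r1 - r0)) ≤ J + lam
    nlinarith [mul_le_mul_of_nonneg_left h1s hlam.le]
  have hmpos : ∀ s : ℝ, 0 < frakm s := fun s => lt_trans (by positivity) (hmlb s)
  refine ⟨?_, ?_, ?_⟩
  · rw [hfr]
    show J + lam * Real.sin (Real.pi * (r0 - r0)/(r1 - r0)) = J
    simp
  · rw [hfr]
    show J + lam * Real.sin (Real.pi * (r1 - r0)/(r1 - r0)) = J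
    rw [show Real.pi * (r1 - r0)/(r1 - r0) = Real.pi by field_simp]
    simp
  · intro r hrmem
    obtain ⟨hr0r, hrr1⟩ := hrmem
    obtain ⟨hBl, hBu2⟩ := hBbd r ⟨hr0r.le, hrr1.le⟩
    have hu0 : frakm r ≠ 0 := (hmpos r).ne'
    have hupos : 0 < frakm r := hmpos r
    have hulb : J/2 < frakm r := hmlb r
    have humub : frakm r ≤ J + lam := hmub r
    have hrM : |r| ≤ M := by
      rw [hMdef, abs_le]
      constructor
      · linarith [neg_abs_le r0, le_max_left |r0| |r1|]
      · linarith [le_abs_self r1, le_max_right |r0| |r1|]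
    simp only [hderiveq]
    -- derivative computation
    have hA := ((hasDerivAt_const r (1:ℝ)).div (hmD r) hu0).sub
      ((hasDerivAt_const r (j^2)).div ((hmD r).pow 3) (pow_ne_zero 3 hu0))
    have hc := (((hφd r).cos).mul_const k).const_mul lam
    have hq := ((hasDerivAt_id r).mul_const J).div ((hmD r).const_mul τ)
      (mul_pos hτ hupos).ne'
    have key : HasDerivAt
        (fun s => s * (1/(frakm s) - j^2/(frakm s)^3)
            * (lam * (Real.cos (Real.pi * (s - r0)/(r1 - r0)) * k)) + s * J / (τ * frakm s))
        ((1/(frakm r) - j^2/(frakm r)^3) * (lam * (Real.cos (Real.pi * (r - r0)/(r1 - r0)) * k))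
          + r * ((-(1/(frakm r)^2) + 3*j^2/(frakm r)^4)
              * (lam * (Real.cos (Real.pi * (r - r0)/(r1 - r0)) * k))^2)
          - r * (1/(frakm r) - j^2/(frakm r)^3)
              * (lam * (Real.sin (Real.pi * (r - r0)/(r1 - r0)) * (k*k)))
          + (J/(τ * frakm r)
             - r*J*(lam * (Real.cos (Real.pi * (r - r0)/(r1 - r0)) * k))/(τ * (frakm r)^2))) r := by
      have hG := (((hasDerivAt_id r).mul hA).mul hc).add hq
      convert hG using 1
      · rfl
      · rfl
      · rfl
      · simp only [Pi.add_apply, Pi.mul_apply, Pi.sub_apply, Pi.div_apply, Pi.pow_apply, id]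
        field_simp
        ring
    rw [key.deriv]
    -- bounds
    have hj2 : j^2 ≤ J^2 := by nlinarith
    have hJi : (0:ℝ) < 1/J := by positivity
    have hJ2i : (0:ℝ) < 1/J^2 := by positivity
    have h1u : 1/(frakm r) ≤ 2/J := by
      rw [div_le_div_iff₀ hupos hJ]; linarith
    have h1u0 : 0 < 1/(frakm r) := by positivity
    have hcube : (J/2)^3 < (frakm r)^3 := by
      apply pow_lt_pow_left₀ hulb (by positivity)
      norm_num
    have hsq : (J/2)^2 < (frakm r)^2 := by
      apply pow_lt_pow_left₀ hulb (by positivity)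
      norm_num
    have hq4 : (J/2)^4 < (frakm r)^4 := by
      apply pow_lt_pow_left₀ hulb (by positivity)
      norm_num
    have hju3 : j^2/(frakm r)^3 ≤ 8/J := by
      rw [div_le_div_iff₀ (by positivity) hJ]
      nlinarith [mul_le_mul_of_nonneg_right hj2 hJ.le, hcube]
    have hju30 : 0 ≤ j^2/(frakm r)^3 := by positivity
    have hA1 : |1/(frakm r) - j^2/(frakm r)^3| ≤ 10/J := by
      rw [abs_le]
      constructor
      · ring_nf at h1u h1u0 hju3 hju30 hJi ⊢ <;> linarith
      · ring_nf at h1u h1u0 hju3 hju30 hJi ⊢ <;> linarith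
    have h1u2 : 1/(frakm r)^2 ≤ 4/J^2 := by
      rw [div_le_div_iff₀ (by positivity) (by positivity)]
      nlinarith [hsq]
    have h1u20 : 0 < 1/(frakm r)^2 := by positivity
    have hju4 : 3*j^2/(frakm r)^4 ≤ 48/J^2 := by
      rw [div_le_div_iff₀ (by positivity) (by positivity)]
      nlinarith [mul_le_mul_of_nonneg_right hj2 (sq_nonneg J), hq4]
    have hju40 : 0 ≤ 3*j^2/(frakm r)^4 := by positivity
    have hA2 : |(-(1/(frakm r)^2) + 3*j^2/(frakm r)^4)| ≤ 52/J^2 := by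
      rw [abs_le]
      constructor
      · ring_nf at h1u2 h1u20 hju4 hju40 hJ2i ⊢ <;> linarith
      · ring_nf at h1u2 h1u20 hju4 hju40 hJ2i ⊢ <;> linarith
    have hcok : |lam * (Real.cos (Real.pi * (r - r0)/(r1 - r0)) * k)| ≤ lam * k := by
      rw [abs_mul, abs_of_pos hlam, abs_mul, abs_of_pos hk]
      exact mul_le_mul_of_nonneg_left
        (mul_le_of_le_one_left hk.le (Real.abs_cos_le_one _)) hlam.le
    have hsik : |lam * (Real.sin (Real.pi * (r - r0)/(r1 - r0)) * (k*k))| ≤ lam * (k*k) := by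
      rw [abs_mul, abs_of_pos hlam, abs_mul, abs_of_pos (mul_pos hk hk)]
      exact mul_le_mul_of_nonneg_left
        (mul_le_of_le_one_left (mul_nonneg hk.le hk.le) (Real.abs_sin_le_one _)) hlam.le
    have hsq2 : |(lam * (Real.cos (Real.pi * (r - r0)/(r1 - r0)) * k))^2| ≤ (lam*k)*(lam*k) := by
      rw [abs_pow]
      calc |lam * (Real.cos (Real.pi * (r - r0)/(r1 - r0)) * k)|^2
          ≤ (lam*k)^2 := pow_le_pow_left₀ (abs_nonneg _) hcok 2
        _ = (lam*k)*(lam*k) := by ring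
    have hE4 : J/(τ*(Bu + 1/τ)) ≤ J/(τ * frakm r) := by
      have hle : τ * frakm r ≤ τ*(Bu + 1/τ) :=
        mul_le_mul_of_nonneg_left (by linarith) hτ.le
      exact div_le_div_of_nonneg_left hJ.le (mul_pos hτ hupos) hle
    have hE1 : |(1/(frakm r) - j^2/(frakm r)^3)
        * (lam * (Real.cos (Real.pi * (r - r0)/(r1 - r0)) * k))| ≤ 10/J*(lam*k) :=
      my_abs_mul_le hA1 hcok
    have hE2raw : |r * ((-(1/(frakm r)^2) + 3*j^2/(frakm r)^4)
        * (lam * (Real.cos (Real.pi * (r - r0)/(r1 - r0)) * k))^2)|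
        ≤ M * (52/J^2 * ((lam*k)*(lam*k))) :=
      my_abs_mul_le hrM (my_abs_mul_le hA2 hsq2)
    have hE2 : |r * ((-(1/(frakm r)^2) + 3*j^2/(frakm r)^4)
        * (lam * (Real.cos (Real.pi * (r - r0)/(r1 - r0)) * k))^2)|
        ≤ 52*M*k^2/J^2*lam := by
      refine le_trans hE2raw ?_
      have hll : lam*lam ≤ lam := mul_le_of_le_one_left hlam.le hlam1
      have hcoef : (0:ℝ) ≤ 52*M*k^2/J^2 :=
        div_nonneg (mul_nonneg (mul_nonneg (by norm_num) hM) (sq_nonneg k)) (by positivity)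
      have heq : M * (52/J^2 * ((lam*k)*(lam*k))) = 52*M*k^2/J^2*(lam*lam) := by ring
      rw [heq]
      exact mul_le_mul_of_nonneg_left hll hcoef
    have hE3 : |r * (1/(frakm r) - j^2/(frakm r)^3)
        * (lam * (Real.sin (Real.pi * (r - r0)/(r1 - r0)) * (k*k)))|
        ≤ M*(10/J)*(lam*(k*k)) :=
      my_abs_mul_le (my_abs_mul_le hrM hA1) hsik
    have hnum : |r*J*(lam * (Real.cos (Real.pi * (r - r0)/(r1 - r0)) * k))| ≤ M*J*(lam*k) :=
      my_abs_mul_le (my_abs_mul_le hrM (le_of_eq (abs_of_pos hJ))) hcok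
    have hden : τ*(J/2)^2 ≤ τ*(frakm r)^2 := mul_le_mul_of_nonneg_left hsq.le hτ.le
    have hE5 : |r*J*(lam * (Real.cos (Real.pi * (r - r0)/(r1 - r0)) * k))/(τ * (frakm r)^2)|
        ≤ 4*M*k/(J*τ)*lam := by
      rw [abs_div, abs_of_pos (by positivity : (0:ℝ) < τ * (frakm r)^2)]
      calc |r*J*(lam * (Real.cos (Real.pi * (r - r0)/(r1 - r0)) * k))| / (τ * (frakm r)^2)
          ≤ (M*J*(lam*k))/(τ*(J/2)^2) :=
            div_le_div₀ (mul_nonneg (mul_nonneg hM hJ.le) (mul_nonneg hlam.le hk.le))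
              hnum (by positivity) hden
        _ = 4*M*k/(J*τ)*lam := by field_simp; ring
    have hF1 := (abs_le.mp hE1).1
    have hF2 := (abs_le.mp hE2).1
    have hF3 := le_trans (le_abs_self _) hE3
    have hF5 := le_trans (le_abs_self _) hE5
    have hsum : 10/J*(lam*k) + (52*M*k^2/J^2*lam + (M*(10/J)*(lam*(k*k))
        + (4*M*k/(J*τ)*lam + lam))) < ε := by
      have heq : 10/J*(lam*k) + (52*M*k^2/J^2*lam + (M*(10/J)*(lam*(k*k))
          + (4*M*k/(J*τ)*lam + lam)))
          = (10*k/J + 52*M*k^2/J^2 + 10*M*k^2/J + 4*M*k/(J*τ) + 1) * lam := by ring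
      rw [heq]
      exact hlamCε
    have hεd2 : ε = Bl + J/(τ*(Bu + 1/τ)) - J := hεdef
    calc -((1/(frakm r) - j^2/(frakm r)^3) * (lam * (Real.cos (Real.pi * (r - r0)/(r1 - r0)) * k))
          + r * ((-(1/(frakm r)^2) + 3*j^2/(frakm r)^4)
              * (lam * (Real.cos (Real.pi * (r - r0)/(r1 - r0)) * k))^2)
          - r * (1/(frakm r) - j^2/(frakm r)^3)
              * (lam * (Real.sin (Real.pi * (r - r0)/(r1 - r0)) * (k*k)))
          + (J/(τ * frakm r)
             - r*J*(lam * (Real.cos (Real.pi * (r - r0)/(r1 - r0)) * k))/(τ * (frakm r)^2)))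
          + frakm r - B r
        = (-((1/(frakm r) - j^2/(frakm r)^3) * (lam * (Real.cos (Real.pi * (r - r0)/(r1 - r0)) * k))))
          + ((-(r * ((-(1/(frakm r)^2) + 3*j^2/(frakm r)^4)
              * (lam * (Real.cos (Real.pi * (r - r0)/(r1 - r0)) * k))^2)))
          + ((r * (1/(frakm r) - j^2/(frakm r)^3)
              * (lam * (Real.sin (Real.pi * (r - r0)/(r1 - r0)) * (k*k))))
          + ((-(J/(τ * frakm r)))
          + ((r*J*(lam * (Real.cos (Real.pi * (r - r0)/(r1 - r0)) * k))/(τ * (frakm r)^2))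
          + (frakm r + (-(B r))))))) := by ring
      _ ≤ (10/J*(lam*k))
          + ((52*M*k^2/J^2*lam)
          + ((M*(10/J)*(lam*(k*k)))
          + ((-(J/(τ*(Bu + 1/τ))))
          + ((4*M*k/(J*τ)*lam)
          + ((J+lam) + (-Bl)))))) := by
            refine add_le_add (neg_le.mp hF1) (add_le_add (neg_le.mp hF2)
              (add_le_add hF3 (add_le_add (neg_le_neg hE4)
                (add_le_add hF5 (add_le_add humub (neg_le_neg hBl))))))
      _ < 0 := by linarith only [hsum, hεd2]
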